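/- Let P be an absolutely continuous probability measure on ℝ^d whose support has Lebesgue-negligible boundary and whose interior of support is connected. Then for every unit vector θ, the pushforward P^θ of P under the projection x ↦ ⟨θ, x⟩ is absolutely continuous, its support has negligible boundary, and the interior of its support is connected (an interval). -/

import Mathlib

open MeasureTheory

noncomputable section

/-- The support of a measure: points all of whose open neighbourhoods have positive measure. -/
def msupport {α : Type*} [TopologicalSpace α] [MeasurableSpace α] (μ : Measure α) : Set α :=
  {x | ∀ U : Set α, IsOpen U → x ∈ U → 0 < μ U}

/-- The complement of the support of a measure is null in a second-countable space. -/
lemma msupport_compl_null {α : Type*} [TopologicalSpace α] [MeasurableSpace α]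
    [SecondCountableTopology α] (μ : Measure α) :
    μ (msupport μ)ᶜ = 0 := by
  have hbasis := TopologicalSpace.isBasis_countableBasis α
  have hcnt : (TopologicalSpace.countableBasis α ∩ {U | μ U = 0}).Countable :=
    (TopologicalSpace.countable_countableBasis α).mono Set.inter_subset_left
  refine measure_mono_null ?_ ((measure_sUnion_null_iff hcnt).2 fun s hs => hs.2)
  intro x hx
  simp only [Set.mem_compl_iff, msupport, Set.mem_setOf_eq, not_forall] at hx
  obtain ⟨U, hUo, hxU, hU0⟩ := hx
  have hU0 : μ U = 0 := by simpa using hU0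
  obtain ⟨V, hVB, hxV, hVU⟩ := hbasis.exists_subset_of_mem_open hxU hUo
  exact ⟨V, ⟨hVB, le_antisymm (hU0 ▸ measure_mono hVU) zero_le⟩, hxV⟩

/-- The frontier of an order-connected subset of `ℝ` is Lebesgue-null. -/
lemma ordConnected_null_frontier {I : Set ℝ} (hI : I.OrdConnected) :
    volume (frontier I) = 0 := by
  have h1 : (lowerBounds I ∩ closure I).Subsingleton := by
    intro x hx y hy
    exact le_antisymm (closure_minimal (fun z hz => hx.1 hz) isClosed_Ici hy.2)
      (closure_minimal (fun z hz => hy.1 hz) isClosed_Ici hx.2)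
  have h2 : (upperBounds I ∩ closure I).Subsingleton := by
    intro x hx y hy
    exact le_antisymm (closure_minimal (fun z hz => hy.1 hz) isClosed_Iic hx.2)
      (closure_minimal (fun z hz => hx.1 hz) isClosed_Iic hy.2)
  have hsub : frontier I ⊆ (lowerBounds I ∩ closure I) ∪ (upperBounds I ∩ closure I) := by
    intro x hx
    rw [show frontier I = closure I \ interior I from rfl] at hx
    obtain ⟨hxc, hxni⟩ := hx
    by_cases hl : x ∈ lowerBounds I
    · exact Or.inl ⟨hl, hxc⟩
    by_cases hu : x ∈ upperBounds I
    · exact Or.inr ⟨hu, hxc⟩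
    exfalso
    simp only [lowerBounds, upperBounds, Set.mem_setOf_eq, not_forall, not_le] at hl hu
    obtain ⟨a, ha, hax⟩ := hl
    obtain ⟨b, hb, hxb⟩ := hu
    exact hxni (interior_maximal (Set.Ioo_subset_Icc_self.trans (hI.out ha hb))
      isOpen_Ioo ⟨hax, hxb⟩)
  exact measure_mono_null hsub ((h1.countable.union h2.countable).measure_zero _)

/-- Preimage of a Lebesgue-null set under pairing with a unit vector is null. -/
lemma preimage_inner_null {d : ℕ} (hd : 0 < d) (θ : EuclideanSpace ℝ (Fin d)) (hθ : ‖θ‖ = 1)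
    {t : Set ℝ} (ht : MeasurableSet t) (hvt : volume t = 0) :
    volume ((fun x => (inner ℝ θ x : ℝ)) ⁻¹' t) = 0 := by
  haveI : NeZero d := ⟨hd.ne'⟩
  have horth : Orthonormal ℝ (Set.restrict {(0 : Fin d)} (fun _ => θ)) := by
    constructor
    · intro i; exact hθ
    · intro i j hij
      exact absurd (Subtype.ext ((Set.mem_singleton_iff.1 i.2).trans
        (Set.mem_singleton_iff.1 j.2).symm)) hij
  obtain ⟨b, hb⟩ := horth.exists_orthonormalBasis_extension_of_card_eq
    (by simp [finrank_euclideanSpace_fin])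
  have hbθ : b 0 = θ := hb 0 rfl
  have hf_eq : ∀ x, (inner ℝ θ x : ℝ) = b.repr x 0 := by
    intro x; rw [← hbθ, b.repr_apply_apply]
  have hmeas : MeasurableSet ((fun y : EuclideanSpace ℝ (Fin d) => y 0) ⁻¹' t) :=
    ((measurable_pi_apply (0 : Fin d)).comp (MeasurableEquiv.toLp 2 (Fin d → ℝ)).symm.measurable) ht
  have h1 : ((fun x => (inner ℝ θ x : ℝ)) ⁻¹' t)
      = ⇑b.repr ⁻¹' ((fun y : EuclideanSpace ℝ (Fin d) => y 0) ⁻¹' t) := by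
    ext x; simp [hf_eq]
  rw [h1, b.measurePreserving_repr.measure_preimage hmeas.nullMeasurableSet]
  have me := EuclideanSpace.volume_preserving_symm_measurableEquiv_toLp (Fin d)
  have h2 : ((fun y : EuclideanSpace ℝ (Fin d) => y 0) ⁻¹' t)
      = (MeasurableEquiv.toLp 2 (Fin d → ℝ)).symm ⁻¹' ((fun x : Fin d → ℝ => x 0) ⁻¹' t) := rfl
  rw [h2, me.measure_preimage (((measurable_pi_apply (0 : Fin d)) ht).nullMeasurableSet)]
  have h3 : ((fun x : Fin d → ℝ => x 0) ⁻¹' t)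
      = Set.pi Set.univ (Function.update (fun _ : Fin d => (Set.univ : Set ℝ)) 0 t) := by
    rw [← Set.eval_preimage]
  rw [h3, volume_pi_pi]
  exact Finset.prod_eq_zero (Finset.mem_univ 0) (by simp [hvt])

/-- If `P` is an absolutely continuous probability measure on `ℝ^d` whose support
has Lebesgue-negligible boundary and connected interior of support, then for every unit vector
`θ` the pushforward `P^θ` of `P` under `x ↦ ⟨θ, x⟩` is absolutely continuous, its support has
negligible boundary, and the interior of its support is connected. -/
theorem statement0 {d : ℕ} (P : Measure (EuclideanSpace ℝ (Fin d)))
    [IsProbabilityMeasure P] (hac : P ≪ volume)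
    (hbd : volume (msupport P \ interior (msupport P)) = 0)
    (hconn : IsConnected (interior (msupport P)))
    (θ : EuclideanSpace ℝ (Fin d)) (hθ : ‖θ‖ = 1) :
    (P.map fun x => (inner ℝ θ x : ℝ)) ≪ (volume : Measure ℝ) ∧
    volume (msupport (P.map fun x => (inner ℝ θ x : ℝ)) \
      interior (msupport (P.map fun x => (inner ℝ θ x : ℝ)))) = 0 ∧
    IsConnected (interior (msupport (P.map fun x => (inner ℝ θ x : ℝ)))) := by
  have hθ0 : θ ≠ 0 := by
    intro h; rw [h, norm_zero] at hθ; exact one_ne_zero hθ.symm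
  have hd : 0 < d := by
    rcases Nat.eq_zero_or_pos d with h | h
    · exfalso; subst h; exact hθ0 (Subsingleton.elim θ 0)
    · exact h
  set f : EuclideanSpace ℝ (Fin d) →L[ℝ] ℝ := innerSL ℝ θ with hf
  have hfapp : ∀ x, f x = (inner ℝ θ x : ℝ) := fun x => rfl
  have hfcoe : (fun x => (inner ℝ θ x : ℝ)) = ⇑f := rfl
  have hfm : Measurable fun x => (inner ℝ θ x : ℝ) := f.continuous.measurable
  have hsurj : Function.Surjective f := by
    intro t
    refine ⟨t • θ, ?_⟩
    rw [hfapp]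
    rw [real_inner_smul_right, real_inner_self_eq_norm_sq, hθ]
    ring
  have hopen : IsOpenMap f := f.isOpenMap hsurj
  set S : Set (EuclideanSpace ℝ (Fin d)) := interior (msupport P) with hS
  set I : Set ℝ := (fun x => (inner ℝ θ x : ℝ)) '' S with hI
  have hIopen : IsOpen I := by rw [hI, hfcoe]; exact hopen S isOpen_interior
  have hIne : I.Nonempty := hconn.nonempty.image _
  have hIpre : IsPreconnected I := hconn.isPreconnected.image _ f.continuous.continuousOn
  have hIoc : I.OrdConnected := hIpre.ordConnected
  -- P of the complement of S is zero
  have hPS : P Sᶜ = 0 := by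
    refine measure_mono_null (fun z hz => ?_) (measure_union_null (msupport_compl_null P) (hac hbd))
    by_cases hzm : z ∈ msupport P
    · exact Or.inr ⟨hzm, hz⟩
    · exact Or.inl hzm
  set Q := P.map fun x => (inner ℝ θ x : ℝ) with hQ
  have hQapp : ∀ U : Set ℝ, MeasurableSet U → Q U = P ((fun x => (inner ℝ θ x : ℝ)) ⁻¹' U) :=
    fun U hU => Measure.map_apply hfm hU
  -- absolute continuity
  have hACQ : Q ≪ (volume : Measure ℝ) := by
    intro s hs
    have hts : s ⊆ toMeasurable volume s := subset_toMeasurable _ _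
    have hvt : volume (toMeasurable volume s) = 0 := by rw [measure_toMeasurable]; exact hs
    have h0 : Q (toMeasurable volume s) = 0 := by
      rw [hQapp _ (measurableSet_toMeasurable _ _)]
      exact hac (preimage_inner_null hd θ hθ (measurableSet_toMeasurable _ _) hvt)
    exact le_antisymm (h0 ▸ measure_mono hts) zero_le
  -- I is contained in the support of Q
  have hIsub : I ⊆ msupport Q := by
    rintro t ⟨y, hyS, rfl⟩ U hUo htU
    rw [hQapp U hUo.measurableSet]
    exact interior_subset hyS _ (hUo.preimage (innerSL ℝ θ).continuous) htU
  -- the support of Q is contained in the closure of I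
  have hmsub : msupport Q ⊆ closure I := by
    intro x hx
    by_contra hxc
    have h0 : Q (closure I)ᶜ = 0 := by
      rw [hQapp _ isClosed_closure.isOpen_compl.measurableSet]
      refine measure_mono_null ?_ hPS
      intro z hz
      simp only [Set.mem_compl_iff] at hz ⊢
      exact fun hzS => hz (subset_closure ⟨z, hzS, rfl⟩)
    exact absurd (hx (closure I)ᶜ isClosed_closure.isOpen_compl hxc) (by simp [h0])
  have hIJ : I ⊆ interior (msupport Q) := interior_maximal hIsub hIopen
  have hJcl : interior (msupport Q) ⊆ closure I := interior_subset.trans hmsub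
  refine ⟨hACQ, ?_, ?_⟩
  · refine measure_mono_null (fun x hx => ?_) (ordConnected_null_frontier hIoc)
    rw [hIopen.frontier_eq]
    exact ⟨hmsub hx.1, fun hxI => hx.2 (hIJ hxI)⟩
  · exact ⟨hIne.mono hIJ, hIpre.subset_closure hIJ hJcl⟩
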